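/- For any fixed 0 ≤ k, l ≤ n, the shuffle set S_{k,n−k} decomposes as the disjoint union over all i + j = l with 0 ≤ i ≤ k, 0 ≤ j ≤ n−k of the sets (S_{ij} × S_{k−i,n−k−j})·τ^{ij}_{kn}, where τ^{ij}_{kn} ∈ S_n fixes p for 1 ≤ p ≤ i and k+j+1 ≤ p ≤ n, sends p ↦ p+j for i+1 ≤ p ≤ k, and p ↦ p−k+i for k+1 ≤ p ≤ k+j, and S_{ij} × S_{k−i,n−k−j} is embedded in S_n acting on the first l and last n−l letters respectively. -/
import Mathlib

set_option maxHeartbeats 1000000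
noncomputable section
open Equiv

/-- the set of `(r, n-r)`-shuffles in `S_n` : increasing on the first `r` letters and on the
last `n-r` letters (0-based). -/
def shufSet (n r : ℕ) : Set (Equiv.Perm (Fin n)) :=
  {w | (∀ a b : Fin n, (a : ℕ) < b → (b : ℕ) < r → w a < w b)
    ∧ (∀ a b : Fin n, r ≤ (a : ℕ) → (a : ℕ) < (b : ℕ) → w a < w b)}

/-- the embedding `S_l × S_{n-l} → S_n`, the first factor acting on the first `l` letters,
the second on the last `n-l` letters. -/
def blockPerm (l n : ℕ) (h : l ≤ n) (u : Equiv.Perm (Fin l)) (v : Equiv.Perm (Fin (n-l))) :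
    Equiv.Perm (Fin n) :=
  (finSumFinEquiv.trans (finCongr (by omega : l + (n-l) = n))).permCongr (u.sumCongr v)

/-- the block transposition `χ_{a,b} ∈ S_{a+b}` : `p ↦ p + b` for `p < a`,
`p ↦ p - a` for `a ≤ p`. -/
def chiPerm (a b : ℕ) : Equiv.Perm (Fin (a+b)) :=
  (finAddFlip.trans (finCongr (Nat.add_comm b a)) : Fin (a+b) ≃ Fin (a+b))

/-- embed a permutation of `b` letters into `S_n` acting on positions `a+1, …, a+b`. -/
def embedAt (a b c n : ℕ) (h : a + b + c = n) (p : Equiv.Perm (Fin b)) :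
    Equiv.Perm (Fin n) :=
  ((Equiv.sumCongr (Equiv.refl (Fin a)) (finSumFinEquiv : Fin b ⊕ Fin c ≃ Fin (b+c))).trans
      (finSumFinEquiv.trans (finCongr (by omega : a + (b+c) = n)))).permCongr
    (Equiv.sumCongr (Equiv.refl (Fin a)) (Equiv.sumCongr p (Equiv.refl (Fin c))))

/-- the permutation `τ^{ij}_{kn} ∈ S_n` : identity on `[1,i]` and `[k+j+1, n]`,
`p ↦ p + j` on `(i, k]`, `p ↦ p - (k-i)` on `(k, k+j]` (1-based description). -/
def tauP (i j r n : ℕ) (h1 : i ≤ r) (h2 : r + j ≤ n) : Equiv.Perm (Fin n) :=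
  embedAt i ((r - i) + j) (n - r - j) n (by omega) (chiPerm (r - i) j)

lemma chiPerm_apply (a b : ℕ) (x : Fin (a+b)) :
    (chiPerm a b x : ℕ) = if (x:ℕ) < a then (x:ℕ) + b else (x:ℕ) - a := by
  rcases x with ⟨x, hx⟩
  simp only [Fin.val_mk]
  unfold chiPerm
  split_ifs with h
  · rw [Equiv.trans_apply, finAddFlip_apply_mk_left h]
    simp [Nat.add_comm]
  · rw [Equiv.trans_apply, finAddFlip_apply_mk_right (by omega) hx]
    simp

section EA
variable (a b c n : ℕ) (h : a + b + c = n)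

def Eabc : Fin a ⊕ (Fin b ⊕ Fin c) ≃ Fin n :=
  ((Equiv.sumCongr (Equiv.refl (Fin a)) (finSumFinEquiv : Fin b ⊕ Fin c ≃ Fin (b+c))).trans
      (finSumFinEquiv.trans (finCongr (by omega : a + (b+c) = n))))

lemma embedAt_on (p : Equiv.Perm (Fin b)) (z : Fin a ⊕ (Fin b ⊕ Fin c)) :
    embedAt a b c n h p (Eabc a b c n h z) =
      Eabc a b c n h (Sum.map id (Sum.map p id) z) := by
  unfold embedAt Eabc
  rw [Equiv.permCongr_apply, Equiv.symm_apply_apply]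
  rcases z with q | q | q <;> rfl

lemma Eabc_inl (q : Fin a) : (Eabc a b c n h (Sum.inl q) : ℕ) = q := by
  simp [Eabc]
lemma Eabc_inr_inl (q : Fin b) : (Eabc a b c n h (Sum.inr (Sum.inl q)) : ℕ) = a + q := by
  simp [Eabc]
lemma Eabc_inr_inr (q : Fin c) : (Eabc a b c n h (Sum.inr (Sum.inr q)) : ℕ) = a + (b + q) := by
  simp [Eabc]

lemma embedAt_apply_lt (p : Equiv.Perm (Fin b)) (x : Fin n) (hx : (x:ℕ) < a) :
    (embedAt a b c n h p x : ℕ) = x := by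
  have hz : x = Eabc a b c n h (Sum.inl ⟨(x:ℕ), hx⟩) := by
    apply Fin.ext; rw [Eabc_inl]
  rw [hz, embedAt_on]
  simp [Eabc_inl]

lemma embedAt_apply_mid (p : Equiv.Perm (Fin b)) (x : Fin n) (hx1 : a ≤ (x:ℕ))
    (hx2 : (x:ℕ) < a + b) :
    (embedAt a b c n h p x : ℕ) = a + (p ⟨(x:ℕ) - a, by omega⟩ : ℕ) := by
  have hz : x = Eabc a b c n h (Sum.inr (Sum.inl ⟨(x:ℕ) - a, by omega⟩)) := by
    apply Fin.ext; rw [Eabc_inr_inl]; simp only [Fin.val_mk]; omega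
  rw [congrArg (fun t => ((embedAt a b c n h p) t : ℕ)) hz, embedAt_on]
  simp [Eabc_inr_inl]

lemma embedAt_apply_ge (p : Equiv.Perm (Fin b)) (x : Fin n) (hx : a + b ≤ (x:ℕ)) :
    (embedAt a b c n h p x : ℕ) = x := by
  have hb : (x:ℕ) < n := x.2
  have hz : x = Eabc a b c n h (Sum.inr (Sum.inr ⟨(x:ℕ) - a - b, by omega⟩)) := by
    apply Fin.ext; rw [Eabc_inr_inr]; simp only [Fin.val_mk]; omega
  rw [congrArg (fun t => ((embedAt a b c n h p) t : ℕ)) hz, embedAt_on]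
  simp only [Sum.map_inr, id_eq, Eabc_inr_inr, Fin.val_mk]
  omega
end EA

section TP
variable (i j r n : ℕ) (h1 : i ≤ r) (h2 : r + j ≤ n)

lemma tauP_apply_lt (x : Fin n) (hx : (x:ℕ) < i) : (tauP i j r n h1 h2 x : ℕ) = x :=
  embedAt_apply_lt _ _ _ _ _ _ _ hx

lemma tauP_apply_mid1 (x : Fin n) (hx1 : i ≤ (x:ℕ)) (hx2 : (x:ℕ) < r) :
    (tauP i j r n h1 h2 x : ℕ) = (x:ℕ) + j := by
  unfold tauP
  rw [embedAt_apply_mid _ _ _ _ _ _ _ hx1 (by omega)]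
  rw [chiPerm_apply]
  simp only [Fin.val_mk]
  split_ifs with h
  · omega
  · omega

lemma tauP_apply_mid2 (x : Fin n) (hx1 : r ≤ (x:ℕ)) (hx2 : (x:ℕ) < r + j) :
    (tauP i j r n h1 h2 x : ℕ) = (x:ℕ) - (r - i) := by
  unfold tauP
  rw [embedAt_apply_mid _ _ _ _ _ _ _ (by omega) (by omega)]
  rw [chiPerm_apply]
  simp only [Fin.val_mk]
  split_ifs with h
  · omega
  · omega

lemma tauP_apply_ge (x : Fin n) (hx : r + j ≤ (x:ℕ)) : (tauP i j r n h1 h2 x : ℕ) = x :=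
  embedAt_apply_ge _ _ _ _ _ _ _ (by omega)

end TP

section BP
variable (l n : ℕ) (hl : l ≤ n) (u : Equiv.Perm (Fin l)) (v : Equiv.Perm (Fin (n-l)))

def Eln : Fin l ⊕ Fin (n-l) ≃ Fin n :=
  finSumFinEquiv.trans (finCongr (by omega : l + (n-l) = n))

lemma blockPerm_on (z : Fin l ⊕ Fin (n-l)) :
    blockPerm l n hl u v (Eln l n hl z) = Eln l n hl (Sum.map u v z) := by
  unfold blockPerm Eln
  rw [Equiv.permCongr_apply, Equiv.symm_apply_apply]
  rcases z with q | q <;> rfl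

lemma Eln_inl (q : Fin l) : (Eln l n hl (Sum.inl q) : ℕ) = q := by simp [Eln]
lemma Eln_inr (q : Fin (n-l)) : (Eln l n hl (Sum.inr q) : ℕ) = l + q := by simp [Eln]

lemma blockPerm_apply_lt (x : Fin n) (hx : (x:ℕ) < l) :
    (blockPerm l n hl u v x : ℕ) = (u ⟨(x:ℕ), hx⟩ : ℕ) := by
  have hz : x = Eln l n hl (Sum.inl ⟨(x:ℕ), hx⟩) := by
    apply Fin.ext; rw [Eln_inl]
  rw [congrArg (fun t => ((blockPerm l n hl u v) t : ℕ)) hz, blockPerm_on]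
  simp [Eln_inl]

lemma blockPerm_apply_ge (x : Fin n) (hx : l ≤ (x:ℕ)) :
    (blockPerm l n hl u v x : ℕ) = l + (v ⟨(x:ℕ) - l, by omega⟩ : ℕ) := by
  have hb : (x:ℕ) < n := x.2
  have hz : x = Eln l n hl (Sum.inr ⟨(x:ℕ) - l, by omega⟩) := by
    apply Fin.ext; rw [Eln_inr]; simp only [Fin.val_mk]; omega
  rw [congrArg (fun t => ((blockPerm l n hl u v) t : ℕ)) hz, blockPerm_on]
  simp [Eln_inr]

end BP

lemma card_filter_Ico (n a b : ℕ) (hb : b ≤ n) :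
    (Finset.univ.filter (fun p : Fin n => a ≤ (p:ℕ) ∧ (p:ℕ) < b)).card = b - a := by
  rcases le_or_gt a b with hab | hab
  · have := Finset.card_bij' (s := Finset.univ.filter (fun p : Fin n => a ≤ (p:ℕ) ∧ (p:ℕ) < b))
      (t := (Finset.univ : Finset (Fin (b - a))))
      (i := fun p hp => ⟨(p:ℕ) - a, by simp [Finset.mem_filter] at hp; omega⟩)
      (j := fun q _ => ⟨a + (q:ℕ), by have := q.2; omega⟩)
      (hi := fun p hp => Finset.mem_univ _)
      (hj := fun q hq => by simp [Finset.mem_filter]; have := q.2; omega)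
      (left_inv := fun p hp => by simp [Finset.mem_filter] at hp; apply Fin.ext; simp; omega)
      (right_inv := fun q hq => by apply Fin.ext; simp)
    rw [this]; simp
  · rw [Finset.filter_false_of_mem, Finset.card_empty]
    · omega
    · intro p hp; omega

lemma seg_lemma {n : ℕ} (a : ℕ) (F : Finset (Fin n)) (hmem : ∀ p ∈ F, a ≤ (p:ℕ))
    (hdc : ∀ p ∈ F, ∀ q : Fin n, a ≤ (q:ℕ) → (q:ℕ) ≤ (p:ℕ) → q ∈ F) (p : Fin n) :
    p ∈ F ↔ a ≤ (p:ℕ) ∧ (p:ℕ) < a + F.card := by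
  constructor
  · intro hp
    refine ⟨hmem p hp, ?_⟩
    have hsub : Finset.univ.filter (fun q : Fin n => a ≤ (q:ℕ) ∧ (q:ℕ) < (p:ℕ)+1) ⊆ F := by
      intro q hq
      simp only [Finset.mem_filter, Finset.mem_univ, true_and] at hq
      exact hdc p hp q hq.1 (by omega)
    have hc := Finset.card_le_card hsub
    rw [card_filter_Ico n a ((p:ℕ)+1) (by have := p.2; omega)] at hc
    have := hmem p hp; omega
  · rintro ⟨hap, hpc⟩
    by_contra hp
    have hsub : F ⊆ Finset.univ.filter (fun q : Fin n => a ≤ (q:ℕ) ∧ (q:ℕ) < (p:ℕ)) := by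
      intro q hq
      simp only [Finset.mem_filter, Finset.mem_univ, true_and]
      refine ⟨hmem q hq, ?_⟩
      by_contra hqp
      push_neg at hqp
      exact hp (hdc q hq p hap (by omega))
    have hc := Finset.card_le_card hsub
    rw [card_filter_Ico n a p (by have := p.2; omega)] at hc
    omega

lemma exists_perm {m : ℕ} (g : Fin m → Fin m) (hg : Function.Injective g) :
    ∃ u : Equiv.Perm (Fin m), ∀ q, u q = g q :=
  ⟨Equiv.ofBijective g (Finite.injective_iff_bijective.mp hg), fun q => rfl⟩

lemma card_wlt (n l : ℕ) (hl : l ≤ n) (w : Equiv.Perm (Fin n)) :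
    (Finset.univ.filter (fun p : Fin n => (w p : ℕ) < l)).card = l := by
  have := Finset.card_bij' (s := Finset.univ.filter (fun p : Fin n => (w p : ℕ) < l))
    (t := (Finset.univ : Finset (Fin l)))
    (i := fun p hp => ⟨(w p : ℕ), by simp [Finset.mem_filter] at hp; exact hp⟩)
    (j := fun q _ => w.symm ⟨(q:ℕ), lt_of_lt_of_le q.2 hl⟩)
    (hi := fun p hp => Finset.mem_univ _)
    (hj := fun q hq => by
      simp only [Finset.mem_filter, Finset.mem_univ, true_and]
      rw [Equiv.apply_symm_apply]
      exact q.2)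
    (left_inv := fun p hp => by
      rw [Equiv.symm_apply_eq])
    (right_inv := fun q hq => by
      apply Fin.ext
      simp [Equiv.apply_symm_apply])
  rw [this]; simp

lemma val_congr {m : ℕ} (u : Equiv.Perm (Fin m)) {a b : ℕ} (ha : a < m) (hb : b < m)
    (h : a = b) : (u ⟨a, ha⟩ : ℕ) = (u ⟨b, hb⟩ : ℕ) := by subst h; rfl

lemma prodApply (n r l i : ℕ) (hl : l ≤ n) (hik : i ≤ r) (hjk : r + (l - i) ≤ n) (hil : i ≤ l)
    (u : Equiv.Perm (Fin l)) (v : Equiv.Perm (Fin (n-l))) (x : Fin n) :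
    ((blockPerm l n hl u v * tauP i (l-i) r n hik hjk) x : ℕ) =
    if h1 : (x:ℕ) < i then (u ⟨(x:ℕ), by omega⟩ : ℕ)
    else if h2 : (x:ℕ) < r then l + (v ⟨(x:ℕ) - i, by omega⟩ : ℕ)
    else if h3 : (x:ℕ) < r + (l - i) then (u ⟨(x:ℕ) - (r - i), by omega⟩ : ℕ)
    else l + (v ⟨(x:ℕ) - l, by omega⟩ : ℕ) := by
  rw [Equiv.Perm.mul_apply]
  split_ifs with h1 h2 h3
  · have ht : ((tauP i (l-i) r n hik hjk) x : ℕ) = (x:ℕ) :=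
      tauP_apply_lt i (l-i) r n hik hjk x h1
    rw [blockPerm_apply_lt l n hl u v _ (by omega)]
    exact val_congr u _ _ ht
  · have ht : ((tauP i (l-i) r n hik hjk) x : ℕ) = (x:ℕ) + (l - i) :=
      tauP_apply_mid1 i (l-i) r n hik hjk x (by omega) h2
    rw [blockPerm_apply_ge l n hl u v _ (by omega)]
    have := val_congr v (by omega) (by omega) (show ((tauP i (l-i) r n hik hjk) x : ℕ) - l
      = (x:ℕ) - i by omega)
    omega
  · have ht : ((tauP i (l-i) r n hik hjk) x : ℕ) = (x:ℕ) - (r - i) :=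
      tauP_apply_mid2 i (l-i) r n hik hjk x (by omega) h3
    rw [blockPerm_apply_lt l n hl u v _ (by omega)]
    exact val_congr u _ _ ht
  · have ht : ((tauP i (l-i) r n hik hjk) x : ℕ) = (x:ℕ) :=
      tauP_apply_ge i (l-i) r n hik hjk x (by omega)
    rw [blockPerm_apply_ge l n hl u v _ (by omega)]
    have := val_congr v (by omega) (by omega) (show ((tauP i (l-i) r n hik hjk) x : ℕ) - l
      = (x:ℕ) - l by omega)
    omega


lemma blockPerm_cancel (l n : ℕ) (hl : l ≤ n) (u' u : Equiv.Perm (Fin l))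
    (v' v : Equiv.Perm (Fin (n-l)))
    (h : blockPerm l n hl u' v' = blockPerm l n hl u v) : u' = u ∧ v' = v := by
  constructor
  · apply Equiv.ext
    intro q
    have pf : (q:ℕ) < n := lt_of_lt_of_le q.2 hl
    have h1 := blockPerm_apply_lt l n hl u' v' ⟨(q:ℕ), pf⟩ q.2
    have h2 := blockPerm_apply_lt l n hl u v ⟨(q:ℕ), pf⟩ q.2
    have hb : ((blockPerm l n hl u' v' ⟨(q:ℕ), pf⟩ : Fin n) : ℕ)
        = ((blockPerm l n hl u v ⟨(q:ℕ), pf⟩ : Fin n) : ℕ) := by rw [h]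
    have h3 := (h1.symm.trans hb).trans h2
    simp only [Fin.val_mk, Fin.eta] at h3
    exact Fin.ext h3
  · apply Equiv.ext
    intro q
    have hq2 := q.2
    have pf : l + (q:ℕ) < n := by omega
    have h1 := blockPerm_apply_ge l n hl u' v' ⟨l + (q:ℕ), pf⟩ (Nat.le_add_right l _)
    have h2 := blockPerm_apply_ge l n hl u v ⟨l + (q:ℕ), pf⟩ (Nat.le_add_right l _)
    have hb : ((blockPerm l n hl u' v' ⟨l + (q:ℕ), pf⟩ : Fin n) : ℕ)
        = ((blockPerm l n hl u v ⟨l + (q:ℕ), pf⟩ : Fin n) : ℕ) := by rw [h]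
    have h3 := (h1.symm.trans hb).trans h2
    simp only [Fin.val_mk, Nat.add_sub_cancel_left, Fin.eta] at h3
    apply Fin.ext
    omega


set_option maxHeartbeats 4000000 in
/-- For fixed `0 ≤ r, l ≤ n`, the shuffle set `S_{r,n-r}` decomposes as the
disjoint union over `i + j = l`, `0 ≤ i ≤ r`, `0 ≤ j ≤ n-r`, of the sets
`(S_{i,j} × S_{r-i, n-r-j}) · τ^{ij}_{rn}`. -/
theorem shuffle_decomposition
    (n r l : ℕ) (hr : r ≤ n) (hl : l ≤ n) :
    -- the factorization predicate :
    let Fact : Equiv.Perm (Fin n) → (ℕ × Equiv.Perm (Fin l) × Equiv.Perm (Fin (n-l))) → Prop :=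
      fun w t => ∃ (hik : t.1 ≤ r) (hjk : r + (l - t.1) ≤ n), t.1 ≤ l
        ∧ t.2.1 ∈ shufSet l t.1
        ∧ t.2.2 ∈ shufSet (n-l) (r - t.1)
        ∧ w = blockPerm l n hl t.2.1 t.2.2 * tauP t.1 (l - t.1) r n hik hjk
    -- every `(r,n-r)`-shuffle factors uniquely :
    (∀ w ∈ shufSet n r, ∃! t, Fact w t)
    -- and every such product is an `(r,n-r)`-shuffle :
    ∧ (∀ w t, Fact w t → w ∈ shufSet n r) := by
  intro Fact
  constructor
  · -- existence and uniqueness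
    intro w hw
    obtain ⟨hw1, hw2⟩ := hw
    set wN : ℕ → ℕ := fun m => if h : m < n then (w ⟨m, h⟩ : ℕ) else 0 with hwN
    have wN_lt : ∀ m, m < n → wN m < n := by
      intro m hm
      simp only [hwN, dif_pos hm]
      exact (w ⟨m, hm⟩).2
    have wN_eq : ∀ x : Fin n, wN (x:ℕ) = (w x : ℕ) := by
      intro x
      simp only [hwN, dif_pos x.2, Fin.eta]
    have W1 : ∀ a b, a < b → b < r → wN a < wN b := by
      intro a b hab hbr
      have hbn : b < n := by omega
      have han : a < n := by omega
      have := hw1 ⟨a, han⟩ ⟨b, hbn⟩ hab hbr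
      rw [Fin.lt_def] at this
      simpa only [hwN, dif_pos han, dif_pos hbn] using this
    have W2 : ∀ a b, r ≤ a → a < b → b < n → wN a < wN b := by
      intro a b hra hab hbn
      have han : a < n := by omega
      have := hw2 ⟨a, han⟩ ⟨b, hbn⟩ hra hab
      rw [Fin.lt_def] at this
      simpa only [hwN, dif_pos han, dif_pos hbn] using this
    have Winj : ∀ a b, a < n → b < n → wN a = wN b → a = b := by
      intro a b ha hb h
      have h' : w ⟨a, ha⟩ = w ⟨b, hb⟩ :=
        Fin.ext (by simpa only [hwN, dif_pos ha, dif_pos hb] using h)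
      exact congrArg Fin.val (w.injective h')
    set F : Finset (Fin n) := Finset.univ.filter (fun p : Fin n => (p:ℕ) < r ∧ (w p : ℕ) < l)
      with hF
    set F' : Finset (Fin n) := Finset.univ.filter (fun p : Fin n => r ≤ (p:ℕ) ∧ (w p : ℕ) < l)
      with hF'
    have hFmem : ∀ p : Fin n, p ∈ F ↔ ((p:ℕ) < r ∧ (w p : ℕ) < l) := by
      intro p
      rw [hF]
      simp [Finset.mem_filter]
    have hF'mem : ∀ p : Fin n, p ∈ F' ↔ (r ≤ (p:ℕ) ∧ (w p : ℕ) < l) := by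
      intro p
      rw [hF']
      simp [Finset.mem_filter]
    obtain ⟨i, hidef⟩ : ∃ i, i = F.card := ⟨F.card, rfl⟩
    obtain ⟨j, hjdef⟩ : ∃ j, j = F'.card := ⟨F'.card, rfl⟩
    have hB : ∀ m, m < r → (wN m < l ↔ m < i) := by
      have hdc : ∀ p ∈ F, ∀ q : Fin n, 0 ≤ (q:ℕ) → (q:ℕ) ≤ (p:ℕ) → q ∈ F := by
        intro p hp q _ hqp
        rw [hFmem] at hp ⊢
        rcases eq_or_lt_of_le hqp with he | hlt
        · have hq : q = p := Fin.ext he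
          rw [hq]; exact hp
        · refine ⟨by omega, ?_⟩
          have := hw1 q p hlt hp.1
          rw [Fin.lt_def] at this
          omega
      have hBmem := seg_lemma 0 F (fun p _ => Nat.zero_le _) hdc
      intro m hm
      have hmn : m < n := by omega
      have h1 := hBmem ⟨m, hmn⟩
      rw [hFmem, ← hidef] at h1
      simp only [Fin.val_mk] at h1
      have h2 : wN m = (w ⟨m, hmn⟩ : ℕ) := by simp only [hwN, dif_pos hmn]
      omega
    have hC : ∀ m, r ≤ m → m < n → (wN m < l ↔ m < r + j) := by
      have hmemr : ∀ p ∈ F', r ≤ (p:ℕ) := by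
        intro p hp
        rw [hF'mem] at hp
        exact hp.1
      have hdc : ∀ p ∈ F', ∀ q : Fin n, r ≤ (q:ℕ) → (q:ℕ) ≤ (p:ℕ) → q ∈ F' := by
        intro p hp q hrq hqp
        rw [hF'mem] at hp ⊢
        rcases eq_or_lt_of_le hqp with he | hlt
        · have hq : q = p := Fin.ext he
          rw [hq]; exact hp
        · refine ⟨hrq, ?_⟩
          have := hw2 q p hrq hlt
          rw [Fin.lt_def] at this
          omega
      have hCmem := seg_lemma r F' hmemr hdc
      intro m hrm hmn
      have h1 := hCmem ⟨m, hmn⟩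
      rw [hF'mem, ← hjdef] at h1
      simp only [Fin.val_mk] at h1
      have h2 : wN m = (w ⟨m, hmn⟩ : ℕ) := by simp only [hwN, dif_pos hmn]
      omega
    have hir : i ≤ r := by
      have hsub : F ⊆ Finset.univ.filter (fun p : Fin n => 0 ≤ (p:ℕ) ∧ (p:ℕ) < r) := by
        intro p hp
        rw [hFmem] at hp
        simp only [Finset.mem_filter, Finset.mem_univ, true_and]
        exact ⟨Nat.zero_le _, hp.1⟩
      have := Finset.card_le_card hsub
      rw [card_filter_Ico n 0 r hr] at this
      omega
    have hjn : r + j ≤ n := by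
      have hsub : F' ⊆ Finset.univ.filter (fun p : Fin n => r ≤ (p:ℕ) ∧ (p:ℕ) < n) := by
        intro p hp
        rw [hF'mem] at hp
        simp only [Finset.mem_filter, Finset.mem_univ, true_and]
        exact ⟨hp.1, p.2⟩
      have := Finset.card_le_card hsub
      rw [card_filter_Ico n r n le_rfl] at this
      omega
    have hij : i + j = l := by
      have hdisj : Disjoint F F' := by
        rw [Finset.disjoint_left]
        intro p hp hp'
        rw [hFmem] at hp
        rw [hF'mem] at hp'
        omega
      have hun : F ∪ F' = Finset.univ.filter (fun p : Fin n => (w p : ℕ) < l) := by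
        ext p
        rw [Finset.mem_union, hFmem, hF'mem]
        simp only [Finset.mem_filter, Finset.mem_univ, true_and]
        omega
      have hcard := Finset.card_union_of_disjoint hdisj
      rw [hun, card_wlt n l hl w] at hcard
      omega
    have hil : i ≤ l := by omega
    have hjk : r + (l - i) ≤ n := by omega
    obtain ⟨u, hu⟩ := exists_perm
      (fun q : Fin l => (⟨if (q:ℕ) < i then wN (q:ℕ) else wN ((q:ℕ) + (r - i)), by
        split_ifs with hq
        · exact (hB (q:ℕ) (by omega)).mpr hq
        · have h1 := hC ((q:ℕ) + (r - i)) (by omega) (by omega)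
          omega⟩ : Fin l))
      (by
        intro q1 q2 hq
        have h' := congrArg Fin.val hq
        simp only [Fin.val_mk] at h'
        apply Fin.ext
        split_ifs at h' <;>
          (have := Winj _ _ (by omega) (by omega) h'; omega))
    have huval : ∀ (m : ℕ) (hm : m < l),
        (u ⟨m, hm⟩ : ℕ) = if m < i then wN m else wN (m + (r - i)) := by
      intro m hm
      rw [hu]
    obtain ⟨v, hv⟩ := exists_perm
      (fun q : Fin (n-l) => (⟨(if (q:ℕ) < r - i then wN (i + (q:ℕ)) else wN (l + (q:ℕ))) - l, by
        split_ifs with hq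
        · have h1 := hB (i + (q:ℕ)) (by omega)
          have h2 := wN_lt (i + (q:ℕ)) (by omega)
          omega
        · have h1 := hC (l + (q:ℕ)) (by omega) (by omega)
          have h2 := wN_lt (l + (q:ℕ)) (by omega)
          omega⟩ : Fin (n-l)))
      (by
        intro q1 q2 hq
        have h' := congrArg Fin.val hq
        simp only [Fin.val_mk] at h'
        apply Fin.ext
        rcases Nat.lt_or_ge (q1:ℕ) (r - i) with ha | ha <;>
          rcases Nat.lt_or_ge (q2:ℕ) (r - i) with hb | hb
        · rw [if_pos ha, if_pos hb] at h'
          have e1 := hB (i + (q1:ℕ)) (by omega)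
          have e2 := hB (i + (q2:ℕ)) (by omega)
          have h3 : wN (i + (q1:ℕ)) = wN (i + (q2:ℕ)) := by omega
          have := Winj _ _ (by omega) (by omega) h3
          omega
        · rw [if_pos ha, if_neg (by omega)] at h'
          have e1 := hB (i + (q1:ℕ)) (by omega)
          have e2 := hC (l + (q2:ℕ)) (by omega) (by omega)
          have h3 : wN (i + (q1:ℕ)) = wN (l + (q2:ℕ)) := by omega
          have := Winj _ _ (by omega) (by omega) h3
          omega
        · rw [if_neg (by omega), if_pos hb] at h'
          have e1 := hC (l + (q1:ℕ)) (by omega) (by omega)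
          have e2 := hB (i + (q2:ℕ)) (by omega)
          have h3 : wN (l + (q1:ℕ)) = wN (i + (q2:ℕ)) := by omega
          have := Winj _ _ (by omega) (by omega) h3
          omega
        · rw [if_neg (by omega), if_neg (by omega)] at h'
          have e1 := hC (l + (q1:ℕ)) (by omega) (by omega)
          have e2 := hC (l + (q2:ℕ)) (by omega) (by omega)
          have h3 : wN (l + (q1:ℕ)) = wN (l + (q2:ℕ)) := by omega
          have := Winj _ _ (by omega) (by omega) h3
          omega)
    have hvval : ∀ (m : ℕ) (hm : m < n - l),
        (v ⟨m, hm⟩ : ℕ) = (if m < r - i then wN (i + m) else wN (l + m)) - l := by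
      intro m hm
      rw [hv]
    have hushuf : u ∈ shufSet l i := by
      refine ⟨?_, ?_⟩
      · intro a b hab hbi
        have ea := huval (a:ℕ) a.2
        rw [show (⟨(a:ℕ), a.2⟩ : Fin l) = a from Fin.ext rfl] at ea
        have eb := huval (b:ℕ) b.2
        rw [show (⟨(b:ℕ), b.2⟩ : Fin l) = b from Fin.ext rfl] at eb
        rw [Fin.lt_def, ea, eb, if_pos (by omega), if_pos hbi]
        exact W1 _ _ hab (by omega)
      · intro a b hia hab
        have ea := huval (a:ℕ) a.2
        rw [show (⟨(a:ℕ), a.2⟩ : Fin l) = a from Fin.ext rfl] at ea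
        have eb := huval (b:ℕ) b.2
        rw [show (⟨(b:ℕ), b.2⟩ : Fin l) = b from Fin.ext rfl] at eb
        rw [Fin.lt_def, ea, eb, if_neg (by omega), if_neg (by omega)]
        have hbl := b.2
        exact W2 _ _ (by omega) (by omega) (by omega)
    have hvshuf : v ∈ shufSet (n-l) (r - i) := by
      refine ⟨?_, ?_⟩
      · intro a b hab hbri
        have ea := hvval (a:ℕ) a.2
        rw [show (⟨(a:ℕ), a.2⟩ : Fin (n-l)) = a from Fin.ext rfl] at ea
        have eb := hvval (b:ℕ) b.2
        rw [show (⟨(b:ℕ), b.2⟩ : Fin (n-l)) = b from Fin.ext rfl] at eb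
        rw [Fin.lt_def, ea, eb, if_pos (by omega), if_pos hbri]
        have g1 := W1 (i + (a:ℕ)) (i + (b:ℕ)) (by omega) (by omega)
        have g2 := hB (i + (a:ℕ)) (by omega)
        omega
      · intro a b hria hab
        have ea := hvval (a:ℕ) a.2
        rw [show (⟨(a:ℕ), a.2⟩ : Fin (n-l)) = a from Fin.ext rfl] at ea
        have eb := hvval (b:ℕ) b.2
        rw [show (⟨(b:ℕ), b.2⟩ : Fin (n-l)) = b from Fin.ext rfl] at eb
        have hbl := b.2
        rw [Fin.lt_def, ea, eb, if_neg (by omega), if_neg (by omega)]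
        have g1 := W2 (l + (a:ℕ)) (l + (b:ℕ)) (by omega) (by omega) (by omega)
        have g2 := hC (l + (a:ℕ)) (by omega) (by omega)
        omega
    have heqw : w = blockPerm l n hl u v * tauP i (l - i) r n hir hjk := by
      apply Equiv.ext
      intro x
      apply Fin.ext
      rw [prodApply n r l i hl hir hjk hil u v x, ← wN_eq x]
      split_ifs with h1 h2 h3
      · rw [huval (x:ℕ) (by omega), if_pos h1]
      · rw [hvval ((x:ℕ) - i) (by omega), if_pos (by omega)]
        have g2 := hB (x:ℕ) (by omega)
        have g3 : i + ((x:ℕ) - i) = (x:ℕ) := by omega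
        rw [g3]
        omega
      · rw [huval ((x:ℕ) - (r - i)) (by omega), if_neg (by omega)]
        congr 1
        omega
      · rw [hvval ((x:ℕ) - l) (by omega), if_neg (by omega)]
        have g2 := hC (x:ℕ) (by omega) (by omega)
        have g3 : l + ((x:ℕ) - l) = (x:ℕ) := by omega
        rw [g3]
        omega
    refine ⟨(i, u, v), ⟨hir, hjk, hil, hushuf, hvshuf, heqw⟩, ?_⟩
    rintro ⟨i', u', v'⟩ ⟨hik', hjk', hil', hu1', hv1', heq'⟩
    have hKB' : ∀ m, m < r → (wN m < l ↔ m < i') := by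
      intro m hm
      have hmn : m < n := by omega
      have hx : (w ⟨m, hmn⟩ : ℕ)
          = ((blockPerm l n hl u' v' * tauP i' (l - i') r n hik' hjk') ⟨m, hmn⟩ : ℕ) := by
        rw [← heq']
      rw [prodApply n r l i' hl hik' hjk' hil' u' v' ⟨m, hmn⟩, ← wN_eq ⟨m, hmn⟩] at hx
      simp only [Fin.val_mk] at hx
      constructor
      · intro hwl
        by_contra hmi
        rw [dif_neg hmi, dif_pos hm] at hx
        omega
      · intro hmi
        rw [dif_pos hmi] at hx
        rw [hx]
        exact Fin.is_lt _
    have hii : i' = i := by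
      by_contra hne
      rcases Nat.lt_or_ge i i' with hlt | hge
      · have a1 := hB i (by omega)
        have a2 := hKB' i (by omega)
        omega
      · have hlt : i' < i := by omega
        have a1 := hB i' (by omega)
        have a2 := hKB' i' (by omega)
        omega
    subst hii
    have hProd : blockPerm l n hl u' v' * tauP i' (l - i') r n hik' hjk' =
        blockPerm l n hl u v * tauP i' (l - i') r n hir hjk := by
      rw [← heq', ← heqw]
    have hBB : blockPerm l n hl u' v' = blockPerm l n hl u v := by
      have ht : tauP i' (l - i') r n hik' hjk' = tauP i' (l - i') r n hir hjk := rfl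
      rw [ht] at hProd
      exact mul_right_cancel hProd
    obtain ⟨hUU, hVV⟩ := blockPerm_cancel l n hl u' u v' v hBB
    rw [hUU, hVV]
  · -- every product is a shuffle
    rintro w ⟨i, u, v⟩ ⟨hik, hjk, hil, hus, hvs, heq⟩
    obtain ⟨hu1, hu2⟩ := hus
    obtain ⟨hv1, hv2⟩ := hvs
    subst heq
    refine ⟨?_, ?_⟩
    · intro a b hab hbr
      rw [Fin.lt_def, prodApply n r l i hl hik hjk hil u v a,
        prodApply n r l i hl hik hjk hil u v b]
      split_ifs
      all_goals try omega
      · exact hu1 _ _ hab (by assumption)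
      · exact Nat.add_lt_add_left
          (hv1 _ _ (show (a:ℕ) - i < (b:ℕ) - i by omega) (show (b:ℕ) - i < r - i by omega)) l
    · intro a b hra hab
      rw [Fin.lt_def, prodApply n r l i hl hik hjk hil u v a,
        prodApply n r l i hl hik hjk hil u v b]
      split_ifs
      all_goals try omega
      · exact hu2 _ _ (show i ≤ (a:ℕ) - (r - i) by omega)
          (show (a:ℕ) - (r - i) < (b:ℕ) - (r - i) by omega)
      · exact Nat.add_lt_add_left
          (hv2 _ _ (show r - i ≤ (a:ℕ) - l by omega) (show (a:ℕ) - l < (b:ℕ) - l by omega)) l
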